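/- Suppose a probability generating function G on [0,1] satisfies the functional equation G(u) = G(1 − α + α·u) · H(u) for all u ∈ [0,1], where H is the pgf of a random variable ε with mean μ_ε and variance σ_ε², α ∈ (0,1), and G corresponds to a random variable X with finite second moment. Then E[X] = μ_ε/(1−α) and Var(X) = (α·μ_ε + σ_ε²)/(1−α²). -/

import Mathlib

open Set Filter Topology

private lemma summable_of_tsum_eq_one {c : ℕ → ℝ} (h : (∑' n, c n) = 1) : Summable c := by
  by_contra hs
  rw [tsum_eq_zero_of_not_summable hs] at h
  norm_num at h

private lemma boundB0 {c x : ℝ} (hc : 0 ≤ c) (hx : |x| ≤ 1) (m : ℕ) :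
    ‖c * x ^ m‖ ≤ c := by
  rw [norm_mul, norm_pow, Real.norm_eq_abs, Real.norm_eq_abs, abs_of_nonneg hc]
  have h1 : |x| ^ m ≤ 1 := pow_le_one₀ (abs_nonneg x) hx
  nlinarith [abs_nonneg x, pow_nonneg (abs_nonneg x) m]

private lemma boundB1 {c x : ℝ} (hc : 0 ≤ c) (hx : |x| ≤ 1) (n m : ℕ) :
    ‖c * ((n : ℝ) * x ^ m)‖ ≤ (n : ℝ) * c := by
  rw [norm_mul, norm_mul, norm_pow, Real.norm_eq_abs, Real.norm_eq_abs, Real.norm_eq_abs,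
    abs_of_nonneg hc, Nat.abs_cast]
  have h1 : |x| ^ m ≤ 1 := pow_le_one₀ (abs_nonneg x) hx
  have h2 : (0:ℝ) ≤ (n:ℝ) := Nat.cast_nonneg n
  nlinarith [mul_le_mul_of_nonneg_left h1 (mul_nonneg hc h2)]

private lemma boundB2 {c x : ℝ} (hc : 0 ≤ c) (hx : |x| ≤ 1) (n k m : ℕ) (hk : k ≤ n) :
    ‖c * ((n : ℝ) * ((k : ℝ) * x ^ m))‖ ≤ (n : ℝ) ^ 2 * c := by
  rw [norm_mul, norm_mul, norm_mul, norm_pow, Real.norm_eq_abs, Real.norm_eq_abs,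
    Real.norm_eq_abs, Real.norm_eq_abs, abs_of_nonneg hc, Nat.abs_cast, Nat.abs_cast]
  have h1 : |x| ^ m ≤ 1 := pow_le_one₀ (abs_nonneg x) hx
  have h2 : (0:ℝ) ≤ (n:ℝ) := Nat.cast_nonneg n
  have h3 : (0:ℝ) ≤ (k:ℝ) := Nat.cast_nonneg k
  have h4 : (k:ℝ) ≤ (n:ℝ) := Nat.cast_le.mpr hk
  nlinarith [mul_le_mul_of_nonneg_left h1 (mul_nonneg (mul_nonneg hc h2) h3),
    mul_le_mul_of_nonneg_left h4 (mul_nonneg hc h2)]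

private lemma pgf_hasDerivAt {c : ℕ → ℝ} (hc : ∀ n, 0 ≤ c n) (hsc : Summable c)
    (h1 : Summable fun n : ℕ => (n : ℝ) * c n) {x : ℝ} (hx : x ∈ Set.Ioo (-1:ℝ) 1) :
    HasDerivAt (fun y : ℝ => ∑' n : ℕ, c n * y ^ n)
      (∑' n : ℕ, c n * ((n : ℝ) * x ^ (n - 1))) x := by
  refine hasDerivAt_tsum_of_isPreconnected h1 isOpen_Ioo
    (convex_Ioo (-1:ℝ) 1).isPreconnected
    (fun n y _ => (hasDerivAt_pow n y).const_mul (c n)) ?_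
    (show (0:ℝ) ∈ Set.Ioo (-1:ℝ) 1 by norm_num) ?_ hx
  · intro n y hy
    exact boundB1 (hc n) (le_of_lt (abs_lt.mpr ⟨hy.1, hy.2⟩)) n (n-1)
  · exact Summable.of_norm_bounded hsc fun n =>
      boundB0 (hc n) (by norm_num) n

private lemma pgf_hasDerivAt2 {c : ℕ → ℝ} (hc : ∀ n, 0 ≤ c n)
    (h1 : Summable fun n : ℕ => (n : ℝ) * c n)
    (h2 : Summable fun n : ℕ => (n : ℝ) ^ 2 * c n) {x : ℝ} (hx : x ∈ Set.Ioo (-1:ℝ) 1) :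
    HasDerivAt (fun y : ℝ => ∑' n : ℕ, c n * ((n : ℝ) * y ^ (n - 1)))
      (∑' n : ℕ, c n * ((n : ℝ) * (((n - 1 : ℕ) : ℝ) * x ^ (n - 1 - 1)))) x := by
  refine hasDerivAt_tsum_of_isPreconnected h2 isOpen_Ioo
    (convex_Ioo (-1:ℝ) 1).isPreconnected
    (fun n y _ => ((hasDerivAt_pow (n-1) y).const_mul (n:ℝ)).const_mul (c n)) ?_
    (show (0:ℝ) ∈ Set.Ioo (-1:ℝ) 1 by norm_num) ?_ hx
  · intro n y hy
    exact boundB2 (hc n) (le_of_lt (abs_lt.mpr ⟨hy.1, hy.2⟩)) n (n-1) (n-1-1) (Nat.sub_le n 1)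
  · exact Summable.of_norm_bounded h1 fun n =>
      boundB1 (hc n) (by norm_num) n (n-1)

private lemma eq_at_one {φ ψ : ℝ → ℝ} (hφ : ContinuousOn φ (Set.Icc 0 1))
    (hψ : ContinuousOn ψ (Set.Icc 0 1)) (h : ∀ u ∈ Set.Ioo (0:ℝ) 1, φ u = ψ u) :
    φ 1 = ψ 1 := by
  have h1 : (1:ℝ) ∈ Set.Icc (0:ℝ) 1 := by norm_num
  have hne : (𝓝[Set.Ioo (0:ℝ) 1] (1:ℝ)).NeBot := by
    apply mem_closure_iff_nhdsWithin_neBot.mp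
    rw [closure_Ioo (by norm_num : (0:ℝ) ≠ 1)]
    exact h1
  have tφ : Tendsto φ (𝓝[Set.Ioo (0:ℝ) 1] 1) (𝓝 (φ 1)) :=
    (hφ 1 h1).mono Set.Ioo_subset_Icc_self
  have tψ : Tendsto ψ (𝓝[Set.Ioo (0:ℝ) 1] 1) (𝓝 (ψ 1)) :=
    (hψ 1 h1).mono Set.Ioo_subset_Icc_self
  have heq : φ =ᶠ[𝓝[Set.Ioo (0:ℝ) 1] 1] ψ :=
    Filter.eventuallyEq_of_mem self_mem_nhdsWithin h
  exact tendsto_nhds_unique (tφ.congr' heq) tψ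

theorem moments_from_functional_equation (p e : ℕ → ℝ) (α : ℝ)
    (hα : α ∈ Set.Ioo (0:ℝ) 1)
    (hp : ∀ n, 0 ≤ p n) (hp1 : (∑' n, p n) = 1)
    (he : ∀ n, 0 ≤ e n) (he1 : (∑' n, e n) = 1)
    (hpm1 : Summable fun n : ℕ => (n : ℝ) * p n)
    (hpm2 : Summable fun n : ℕ => (n : ℝ) ^ 2 * p n)
    (hem1 : Summable fun n : ℕ => (n : ℝ) * e n)
    (hem2 : Summable fun n : ℕ => (n : ℝ) ^ 2 * e n)
    (hfe : ∀ u ∈ Set.Icc (0:ℝ) 1,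
      (∑' n : ℕ, p n * u ^ n)
        = (∑' n : ℕ, p n * (1 - α + α * u) ^ n) * (∑' n : ℕ, e n * u ^ n)) :
    (∑' n : ℕ, (n : ℝ) * p n) = (∑' n : ℕ, (n : ℝ) * e n) / (1 - α) ∧
    (∑' n : ℕ, (n : ℝ) ^ 2 * p n) - (∑' n : ℕ, (n : ℝ) * p n) ^ 2
      = (α * (∑' n : ℕ, (n : ℝ) * e n)
          + ((∑' n : ℕ, (n : ℝ) ^ 2 * e n) - (∑' n : ℕ, (n : ℝ) * e n) ^ 2))
        / (1 - α ^ 2) := by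
  obtain ⟨hα0, hα1⟩ := hα
  have hsp : Summable p := summable_of_tsum_eq_one hp1
  have hse : Summable e := summable_of_tsum_eq_one he1
  set G : ℝ → ℝ := fun u => ∑' n : ℕ, p n * u ^ n with hGdef
  set H : ℝ → ℝ := fun u => ∑' n : ℕ, e n * u ^ n with hHdef
  set Dp : ℝ → ℝ := fun u => ∑' n : ℕ, p n * ((n : ℝ) * u ^ (n - 1)) with hDpdef
  set De : ℝ → ℝ := fun u => ∑' n : ℕ, e n * ((n : ℝ) * u ^ (n - 1)) with hDedef
  set Sp : ℝ → ℝ :=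
    fun u => ∑' n : ℕ, p n * ((n : ℝ) * (((n - 1 : ℕ) : ℝ) * u ^ (n - 1 - 1))) with hSpdef
  set Se : ℝ → ℝ :=
    fun u => ∑' n : ℕ, e n * ((n : ℝ) * (((n - 1 : ℕ) : ℝ) * u ^ (n - 1 - 1))) with hSedef
  set v : ℝ → ℝ := fun u => 1 - α + α * u with hvdef
  have hfe' : ∀ u ∈ Set.Icc (0:ℝ) 1, G u = G (v u) * H u := fun u hu => hfe u hu
  have hIoo : ∀ u ∈ Set.Ioo (0:ℝ) 1, u ∈ Set.Ioo (-1:ℝ) 1 :=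
    fun u hu => ⟨by linarith [hu.1], hu.2⟩
  have hv_mem : ∀ u ∈ Set.Ioo (0:ℝ) 1, v u ∈ Set.Ioo (-1:ℝ) 1 := by
    intro u hu
    constructor
    · simp only [hvdef]; nlinarith [hu.1, hu.2]
    · simp only [hvdef]; nlinarith [hu.1, hu.2]
  have hv_maps : ∀ u ∈ Set.Icc (0:ℝ) 1, v u ∈ Set.Icc (0:ℝ) 1 := by
    intro u hu
    constructor
    · simp only [hvdef]; nlinarith [hu.1, hu.2]
    · simp only [hvdef]; nlinarith [hu.1, hu.2]
  have hvc : Continuous v := by simp only [hvdef]; continuity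
  have hin : ∀ u : ℝ, HasDerivAt v α u := by
    intro u
    have := ((hasDerivAt_id u).const_mul α).const_add (1 - α)
    simp only [mul_one] at this
    exact this
  -- first derivative identity on (0,1)
  have hA : ∀ u ∈ Set.Ioo (0:ℝ) 1,
      Dp u = Dp (v u) * α * H u + G (v u) * De u := by
    intro u hu
    have hL : HasDerivAt G (Dp u) u := pgf_hasDerivAt hp hsp hpm1 (hIoo u hu)
    have hGv : HasDerivAt (fun y => G (v y)) (Dp (v u) * α) u :=
      (pgf_hasDerivAt hp hsp hpm1 (hv_mem u hu)).comp u (hin u)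
    have hHd : HasDerivAt H (De u) u := pgf_hasDerivAt he hse hem1 (hIoo u hu)
    have hR : HasDerivAt (fun y => G (v y) * H y)
        (Dp (v u) * α * H u + G (v u) * De u) u := hGv.mul hHd
    have heq : G =ᶠ[𝓝 u] fun y => G (v y) * H y :=
      Filter.eventuallyEq_of_mem (Icc_mem_nhds hu.1 hu.2) hfe'
    exact ((hR.congr_of_eventuallyEq heq).unique hL).symm
  -- second derivative identity on (0,1)
  have hB : ∀ u ∈ Set.Ioo (0:ℝ) 1,
      Sp u = Sp (v u) * α * α * H u + Dp (v u) * α * De u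
        + (Dp (v u) * α * De u + G (v u) * Se u) := by
    intro u hu
    have hL : HasDerivAt Dp (Sp u) u := pgf_hasDerivAt2 hp hpm1 hpm2 (hIoo u hu)
    have hSpv : HasDerivAt (fun y => Dp (v y)) (Sp (v u) * α) u :=
      (pgf_hasDerivAt2 hp hpm1 hpm2 (hv_mem u hu)).comp u (hin u)
    have hterm1 : HasDerivAt (fun y => Dp (v y) * α) (Sp (v u) * α * α) u :=
      hSpv.mul_const α
    have hHd : HasDerivAt H (De u) u := pgf_hasDerivAt he hse hem1 (hIoo u hu)
    have hGv : HasDerivAt (fun y => G (v y)) (Dp (v u) * α) u :=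
      (pgf_hasDerivAt hp hsp hpm1 (hv_mem u hu)).comp u (hin u)
    have hDed : HasDerivAt De (Se u) u := pgf_hasDerivAt2 he hem1 hem2 (hIoo u hu)
    have hR : HasDerivAt (fun y => Dp (v y) * α * H y + G (v y) * De y)
        (Sp (v u) * α * α * H u + Dp (v u) * α * De u
          + (Dp (v u) * α * De u + G (v u) * Se u)) u :=
      (hterm1.mul hHd).add (hGv.mul hDed)
    have heq : Dp =ᶠ[𝓝 u] fun y => Dp (v y) * α * H y + G (v y) * De y :=
      Filter.eventuallyEq_of_mem (Ioo_mem_nhds hu.1 hu.2) hA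
    exact ((hR.congr_of_eventuallyEq heq).unique hL).symm
  -- continuity of all the series on [0,1]
  have habs : ∀ x : ℝ, x ∈ Set.Icc (0:ℝ) 1 → |x| ≤ 1 := by
    intro x hx
    rw [abs_of_nonneg hx.1]; exact hx.2
  have hGc : ContinuousOn G (Set.Icc (0:ℝ) 1) := by
    refine continuousOn_tsum (fun n => ?_) hsp (fun n x hx => boundB0 (hp n) (habs x hx) n)
    exact (continuous_const.mul (continuous_pow n)).continuousOn
  have hHc : ContinuousOn H (Set.Icc (0:ℝ) 1) := by
    refine continuousOn_tsum (fun n => ?_) hse (fun n x hx => boundB0 (he n) (habs x hx) n)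
    exact (continuous_const.mul (continuous_pow n)).continuousOn
  have hDpc : ContinuousOn Dp (Set.Icc (0:ℝ) 1) := by
    refine continuousOn_tsum (fun n => ?_) hpm1
      (fun n x hx => boundB1 (hp n) (habs x hx) n (n-1))
    exact (continuous_const.mul (continuous_const.mul (continuous_pow (n-1)))).continuousOn
  have hDec : ContinuousOn De (Set.Icc (0:ℝ) 1) := by
    refine continuousOn_tsum (fun n => ?_) hem1
      (fun n x hx => boundB1 (he n) (habs x hx) n (n-1))
    exact (continuous_const.mul (continuous_const.mul (continuous_pow (n-1)))).continuousOn
  have hSpc : ContinuousOn Sp (Set.Icc (0:ℝ) 1) := by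
    refine continuousOn_tsum (fun n => ?_) hpm2
      (fun n x hx => boundB2 (hp n) (habs x hx) n (n-1) (n-1-1) (Nat.sub_le n 1))
    exact (continuous_const.mul (continuous_const.mul
      (continuous_const.mul (continuous_pow (n-1-1))))).continuousOn
  have hSec : ContinuousOn Se (Set.Icc (0:ℝ) 1) := by
    refine continuousOn_tsum (fun n => ?_) hem2
      (fun n x hx => boundB2 (he n) (habs x hx) n (n-1) (n-1-1) (Nat.sub_le n 1))
    exact (continuous_const.mul (continuous_const.mul
      (continuous_const.mul (continuous_pow (n-1-1))))).continuousOn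
  have hvcont : ContinuousOn v (Set.Icc (0:ℝ) 1) := hvc.continuousOn
  have hGvc : ContinuousOn (fun u => G (v u)) (Set.Icc (0:ℝ) 1) :=
    hGc.comp hvcont hv_maps
  have hDpvc : ContinuousOn (fun u => Dp (v u)) (Set.Icc (0:ℝ) 1) :=
    hDpc.comp hvcont hv_maps
  have hSpvc : ContinuousOn (fun u => Sp (v u)) (Set.Icc (0:ℝ) 1) :=
    hSpc.comp hvcont hv_maps
  -- pass to the limit u = 1
  have hv1 : v 1 = 1 := by simp only [hvdef]; ring
  have hE1 : Dp 1 = Dp (v 1) * α * H 1 + G (v 1) * De 1 := by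
    refine eq_at_one hDpc ?_ hA
    exact ((hDpvc.mul continuousOn_const).mul hHc).add (hGvc.mul hDec)
  have hE2 : Sp 1 = Sp (v 1) * α * α * H 1 + Dp (v 1) * α * De 1
      + (Dp (v 1) * α * De 1 + G (v 1) * Se 1) := by
    refine eq_at_one hSpc ?_ hB
    exact ((((hSpvc.mul continuousOn_const).mul continuousOn_const).mul hHc).add
      ((hDpvc.mul continuousOn_const).mul hDec)).add
      (((hDpvc.mul continuousOn_const).mul hDec).add (hGvc.mul hSec))
  -- values at 1
  have hG1 : G 1 = 1 := by rw [hGdef]; simpa using hp1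
  have hH1 : H 1 = 1 := by rw [hHdef]; simpa using he1
  have hDp1 : Dp 1 = ∑' n : ℕ, (n : ℝ) * p n := by
    rw [hDpdef]
    exact tsum_congr fun n => by simp [mul_comm]
  have hDe1 : De 1 = ∑' n : ℕ, (n : ℝ) * e n := by
    rw [hDedef]
    exact tsum_congr fun n => by simp [mul_comm]
  have hSp1 : Sp 1 = (∑' n : ℕ, (n : ℝ) ^ 2 * p n) - (∑' n : ℕ, (n : ℝ) * p n) := by
    rw [hSpdef, ← Summable.tsum_sub hpm2 hpm1]
    refine tsum_congr fun n => ?_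
    cases n with
    | zero => simp
    | succ m =>
      simp only [Nat.succ_sub_one, one_pow, mul_one]
      push_cast
      ring
  have hSe1 : Se 1 = (∑' n : ℕ, (n : ℝ) ^ 2 * e n) - (∑' n : ℕ, (n : ℝ) * e n) := by
    rw [hSedef, ← Summable.tsum_sub hem2 hem1]
    refine tsum_congr fun n => ?_
    cases n with
    | zero => simp
    | succ m =>
      simp only [Nat.succ_sub_one, one_pow, mul_one]
      push_cast
      ring
  rw [hv1, hG1, hH1, hDp1, hDe1] at hE1 hE2
  rw [hSp1, hSe1] at hE2
  -- final algebra
  set mp := ∑' n : ℕ, (n : ℝ) * p n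
  set me := ∑' n : ℕ, (n : ℝ) * e n
  set sp := ∑' n : ℕ, (n : ℝ) ^ 2 * p n
  set se := ∑' n : ℕ, (n : ℝ) ^ 2 * e n
  have h1α : (1:ℝ) - α ≠ 0 := by intro h; nlinarith
  have h1α2 : (1:ℝ) - α ^ 2 ≠ 0 := by intro h; nlinarith
  constructor
  · rw [eq_div_iff h1α]
    linear_combination hE1
  · rw [eq_div_iff h1α2]
    linear_combination hE2 - (me + (1 + α) * (mp - 1)) * hE1
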